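/- Let c : ℝ → ℂ be continuous 2π-periodic with mean M₀ and e^{2πiM₀} ≠ 1, and let f be continuous 2π-periodic. Then the two formulas u₊(t) = (e^{2πiM₀} - 1)^{-1} ∫₀^{2π} exp(i∫_t^{t+s} c(r)dr) f(t+s) ds and u₋(t) = (1 - e^{-2πiM₀})^{-1} ∫₀^{2π} exp(-i∫_{t-s}^t c(r)dr) f(t-s) ds define the same function, namely the unique 2π-periodic solution of u' + icu = f. -/

import Mathlib

/-- Remark 10: the forward and backward representation formulas
`uPlus(t) = (e^{2πiM₀} - 1)⁻¹ ∫₀^{2π} exp(i∫_t^{t+s} c) f(t+s) ds` and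
`uMinus(t) = (1 - e^{-2πiM₀})⁻¹ ∫₀^{2π} exp(-i∫_{t-s}^t c) f(t-s) ds`
define the same function, the unique `2π`-periodic solution of `u' + i c u = f`. -/
theorem forward_backward_formulas_agree (c f : ℝ → ℂ)
    (hc : Continuous c) (hf : Continuous f)
    (hcper : ∀ t, c (t + 2 * Real.pi) = c t) (hfper : ∀ t, f (t + 2 * Real.pi) = f t)
    (M₀ : ℂ) (hM₀ : M₀ = ((2 * Real.pi : ℝ) : ℂ)⁻¹ * ∫ t in (0 : ℝ)..(2 * Real.pi), c t)
    (hres : Complex.exp (((2 * Real.pi : ℝ) : ℂ) * Complex.I * M₀) ≠ 1)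
    (uPlus uMinus : ℝ → ℂ)
    (huPlus : ∀ t, uPlus t = (Complex.exp (((2 * Real.pi : ℝ) : ℂ) * Complex.I * M₀) - 1)⁻¹ *
      ∫ s in (0 : ℝ)..(2 * Real.pi),
        Complex.exp (Complex.I * ((∫ r in t..(t + s), c r : ℂ))) * f (t + s))
    (huMinus : ∀ t, uMinus t = (1 - Complex.exp (-(((2 * Real.pi : ℝ) : ℂ) * Complex.I * M₀)))⁻¹ *
      ∫ s in (0 : ℝ)..(2 * Real.pi),
        Complex.exp (-(Complex.I * ((∫ r in (t - s)..t, c r : ℂ)))) * f (t - s)) :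
    uPlus = uMinus ∧
    (∀ t, uPlus (t + 2 * Real.pi) = uPlus t) ∧
    (∀ t, HasDerivAt uPlus (f t - Complex.I * c t * uPlus t) t) ∧
    (∀ v : ℝ → ℂ, (∀ t, v (t + 2 * Real.pi) = v t) →
      (∀ t, HasDerivAt v (f t - Complex.I * c t * v t) t) → v = uPlus) := by
  set a : ℂ := ((2 * Real.pi : ℝ) : ℂ) * Complex.I * M₀ with ha
  have h2π : ((2 * Real.pi : ℝ) : ℂ) ≠ 0 := by
    exact_mod_cast ne_of_gt (by positivity : (0:ℝ) < 2 * Real.pi)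
  -- basic facts about the resolvent constant
  have h1 : Complex.exp a - 1 ≠ 0 := sub_ne_zero.mpr hres
  have h2 : 1 - Complex.exp (-a) ≠ 0 := by
    intro hh
    apply hres
    have : Complex.exp (-a) = 1 := by linear_combination -hh
    rwa [Complex.exp_neg, inv_eq_one] at this
  -- the mean value identity
  have hI2 : Complex.I * (∫ r in (0:ℝ)..(2 * Real.pi), c r) = a := by
    rw [ha, hM₀]
    have hmi : ((2 * Real.pi : ℝ) : ℂ) * (((2 * Real.pi : ℝ) : ℂ))⁻¹ = 1 :=
      mul_inv_cancel₀ h2π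
    linear_combination (-(Complex.I * ∫ r in (0:ℝ)..(2 * Real.pi), c r)) * hmi
  -- the exponential integrating factor and its inverse
  set E : ℝ → ℂ := fun t => Complex.exp (Complex.I * ∫ r in (0:ℝ)..t, c r) with hE
  set Einv : ℝ → ℂ := fun t => Complex.exp (-(Complex.I * ∫ r in (0:ℝ)..t, c r)) with hEinv
  have hEne : ∀ t, E t ≠ 0 := fun t => Complex.exp_ne_zero _
  have hEinv_eq : ∀ t, Einv t = (E t)⁻¹ := by
    intro t; simp [hE, hEinv, Complex.exp_neg]
  have hEinvE : ∀ t, Einv t * E t = 1 := by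
    intro t; rw [hEinv_eq]; exact inv_mul_cancel₀ (hEne t)
  -- interval integral of c from s to t
  have hint : ∀ s t : ℝ, (∫ r in s..t, c r) =
      (∫ r in (0:ℝ)..t, c r) - ∫ r in (0:ℝ)..s, c r := by
    intro s t
    rw [intervalIntegral.integral_interval_sub_left (hc.intervalIntegrable _ _)
      (hc.intervalIntegrable _ _)]
  -- periodicity shift of the primitive of c
  have hcP : Function.Periodic c (2 * Real.pi) := hcper
  have hshiftc : ∀ t : ℝ, (∫ r in (0:ℝ)..(t + 2 * Real.pi), c r) =
      (∫ r in (0:ℝ)..t, c r) + ∫ r in (0:ℝ)..(2 * Real.pi), c r := by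
    intro t
    have h3 : (∫ r in t..(t + 2 * Real.pi), c r) = ∫ r in (0:ℝ)..(0 + 2 * Real.pi), c r :=
      hcP.intervalIntegral_add_eq t 0
    rw [← intervalIntegral.integral_add_adjacent_intervals (a := (0:ℝ)) (b := t)
      (c := t + 2 * Real.pi) (hc.intervalIntegrable _ _) (hc.intervalIntegrable _ _), h3,
      zero_add]
  have hEshift : ∀ t, E (t + 2 * Real.pi) = E t * Complex.exp a := by
    intro t
    rw [hE]
    simp only
    rw [hshiftc, mul_add, Complex.exp_add, hI2]
  have hEinvshift : ∀ t, Einv (t + 2 * Real.pi) = Einv t * Complex.exp (-a) := by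
    intro t
    rw [hEinv]
    simp only
    rw [hshiftc, mul_add, neg_add, Complex.exp_add, hI2]
  -- derivatives of E and Einv
  have hprim : ∀ t : ℝ, HasDerivAt (fun u => ∫ r in (0:ℝ)..u, c r) (c t) t :=
    fun t => (hc.integral_hasStrictDerivAt 0 t).hasDerivAt
  have hEderiv : ∀ t, HasDerivAt E (E t * (Complex.I * c t)) t := by
    intro t
    exact ((hprim t).const_mul Complex.I).cexp
  have hEinvderiv : ∀ t, HasDerivAt Einv (Einv t * -(Complex.I * c t)) t := by
    intro t
    exact ((hprim t).const_mul Complex.I).neg.cexp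
  -- the primitive G of E * f
  have hEcont : Continuous E := by
    apply Complex.continuous_exp.comp
    exact continuous_const.mul
      (Differentiable.continuous fun t => (hprim t).differentiableAt)
  have hEfcont : Continuous fun σ => E σ * f σ := hEcont.mul hf
  set G : ℝ → ℂ := fun x => ∫ σ in (0:ℝ)..x, E σ * f σ with hG
  have hGd : ∀ t, HasDerivAt G (E t * f t) t :=
    fun t => (hEfcont.integral_hasStrictDerivAt 0 t).hasDerivAt
  have hGsub : ∀ s t : ℝ, (∫ σ in s..t, E σ * f σ) = G t - G s := by
    intro s t
    rw [hG]
    simp only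
    rw [intervalIntegral.integral_interval_sub_left (hEfcont.intervalIntegrable _ _)
      (hEfcont.intervalIntegrable _ _)]
  -- pointwise shift of E * f
  have hEf : ∀ σ : ℝ, E (σ + 2 * Real.pi) * f (σ + 2 * Real.pi) =
      Complex.exp a * (E σ * f σ) := by
    intro σ
    rw [hEshift, hfper]; ring
  -- forward representation
  have hrepP : ∀ t, uPlus t =
      (Complex.exp a - 1)⁻¹ * (Einv t * (G (t + 2 * Real.pi) - G t)) := by
    intro t
    rw [huPlus t]
    have hg : ∀ s : ℝ, Complex.exp (Complex.I * ((∫ r in t..(t + s), c r : ℂ))) * f (t + s) =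
        Einv t * (E (t + s) * f (t + s)) := by
      intro s
      rw [hint, mul_sub, Complex.exp_sub]
      rw [hE, hEinv]
      simp only
      rw [Complex.exp_neg, div_eq_mul_inv]
      ring
    calc (Complex.exp a - 1)⁻¹ *
        ∫ s in (0:ℝ)..(2 * Real.pi),
          Complex.exp (Complex.I * ((∫ r in t..(t + s), c r : ℂ))) * f (t + s)
        = (Complex.exp a - 1)⁻¹ *
          ∫ s in (0:ℝ)..(2 * Real.pi), Einv t * (E (t + s) * f (t + s)) := by
          congr 1
          exact intervalIntegral.integral_congr (fun s _ => hg s)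
      _ = (Complex.exp a - 1)⁻¹ *
          (Einv t * ∫ s in (0:ℝ)..(2 * Real.pi), E (t + s) * f (t + s)) := by
          rw [intervalIntegral.integral_const_mul]
      _ = (Complex.exp a - 1)⁻¹ * (Einv t * (G (t + 2 * Real.pi) - G t)) := by
          have := intervalIntegral.integral_comp_add_left (a := (0:ℝ)) (b := 2 * Real.pi)
            (fun σ => E σ * f σ) t
          rw [this, add_zero, hGsub]
  -- backward representation
  have hrepM : ∀ t, uMinus t =
      (1 - Complex.exp (-a))⁻¹ * (Einv t * (G t - G (t - 2 * Real.pi))) := by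
    intro t
    rw [huMinus t]
    have hg : ∀ s : ℝ, Complex.exp (-(Complex.I * ((∫ r in (t - s)..t, c r : ℂ)))) * f (t - s) =
        Einv t * (E (t - s) * f (t - s)) := by
      intro s
      rw [hint, mul_sub, neg_sub, Complex.exp_sub]
      rw [hE, hEinv]
      simp only
      rw [Complex.exp_neg, div_eq_mul_inv]
      ring
    calc (1 - Complex.exp (-a))⁻¹ *
        ∫ s in (0:ℝ)..(2 * Real.pi),
          Complex.exp (-(Complex.I * ((∫ r in (t - s)..t, c r : ℂ)))) * f (t - s)
        = (1 - Complex.exp (-a))⁻¹ *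
          ∫ s in (0:ℝ)..(2 * Real.pi), Einv t * (E (t - s) * f (t - s)) := by
          congr 1
          exact intervalIntegral.integral_congr (fun s _ => hg s)
      _ = (1 - Complex.exp (-a))⁻¹ *
          (Einv t * ∫ s in (0:ℝ)..(2 * Real.pi), E (t - s) * f (t - s)) := by
          rw [intervalIntegral.integral_const_mul]
      _ = (1 - Complex.exp (-a))⁻¹ * (Einv t * (G t - G (t - 2 * Real.pi))) := by
          have := intervalIntegral.integral_comp_sub_left (a := (0:ℝ)) (b := 2 * Real.pi)
            (fun σ => E σ * f σ) t
          rw [this, sub_zero, hGsub]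
  -- shift identity for G
  have hshiftG : ∀ t : ℝ, G t - G (t - 2 * Real.pi) =
      Complex.exp (-a) * (G (t + 2 * Real.pi) - G t) := by
    intro t
    have h4 : (∫ σ in t..(t + 2 * Real.pi), E (σ - 2 * Real.pi) * f (σ - 2 * Real.pi)) =
        ∫ σ in (t - 2 * Real.pi)..(t + 2 * Real.pi - 2 * Real.pi), E σ * f σ :=
      intervalIntegral.integral_comp_sub_right (fun σ => E σ * f σ) (2 * Real.pi)
    have h5 : ∀ σ : ℝ, E (σ - 2 * Real.pi) * f (σ - 2 * Real.pi) =
        Complex.exp (-a) * (E σ * f σ) := by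
      intro σ
      have := hEf (σ - 2 * Real.pi)
      rw [sub_add_cancel] at this
      have hea : Complex.exp a ≠ 0 := Complex.exp_ne_zero a
      rw [Complex.exp_neg]
      field_simp
      linear_combination -this
    rw [add_sub_cancel_right] at h4
    rw [← hGsub, ← hGsub, ← h4]
    rw [show (∫ σ in t..(t + 2 * Real.pi), E (σ - 2 * Real.pi) * f (σ - 2 * Real.pi)) =
        ∫ σ in t..(t + 2 * Real.pi), Complex.exp (-a) * (E σ * f σ) from
      intervalIntegral.integral_congr (fun σ _ => h5 σ)]
    rw [intervalIntegral.integral_const_mul, hGsub]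
  -- forward shift identity for G
  have hshiftG2 : ∀ t : ℝ, G (t + 2 * Real.pi + 2 * Real.pi) - G (t + 2 * Real.pi) =
      Complex.exp a * (G (t + 2 * Real.pi) - G t) := by
    intro t
    have h4 : (∫ σ in t..(t + 2 * Real.pi), E (σ + 2 * Real.pi) * f (σ + 2 * Real.pi)) =
        ∫ σ in (t + 2 * Real.pi)..(t + 2 * Real.pi + 2 * Real.pi), E σ * f σ :=
      intervalIntegral.integral_comp_add_right (fun σ => E σ * f σ) (2 * Real.pi)
    rw [← hGsub, ← hGsub, ← h4]
    rw [show (∫ σ in t..(t + 2 * Real.pi), E (σ + 2 * Real.pi) * f (σ + 2 * Real.pi)) =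
        ∫ σ in t..(t + 2 * Real.pi), Complex.exp a * (E σ * f σ) from
      intervalIntegral.integral_congr (fun σ _ => hEf σ)]
    rw [intervalIntegral.integral_const_mul, hGsub]
  -- uPlus = uMinus
  have hKa : (1 - Complex.exp (-a))⁻¹ * Complex.exp (-a) = (Complex.exp a - 1)⁻¹ := by
    rw [Complex.exp_neg] at *
    have he : Complex.exp a ≠ 0 := Complex.exp_ne_zero a
    field_simp
  have heq : uPlus = uMinus := by
    funext t
    rw [hrepP t, hrepM t, hshiftG t]
    calc (Complex.exp a - 1)⁻¹ * (Einv t * (G (t + 2 * Real.pi) - G t))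
        = ((1 - Complex.exp (-a))⁻¹ * Complex.exp (-a)) *
          (Einv t * (G (t + 2 * Real.pi) - G t)) := by rw [hKa]
      _ = (1 - Complex.exp (-a))⁻¹ *
          (Einv t * (Complex.exp (-a) * (G (t + 2 * Real.pi) - G t))) := by ring
  -- periodicity of uPlus
  have hper : ∀ t, uPlus (t + 2 * Real.pi) = uPlus t := by
    intro t
    rw [hrepP t, hrepP (t + 2 * Real.pi), hEinvshift, hshiftG2]
    have hexp : Complex.exp (-a) * Complex.exp a = 1 := by
      rw [← Complex.exp_add]; simp
    linear_combination
      ((Complex.exp a - 1)⁻¹ * Einv t * (G (t + 2 * Real.pi) - G t)) * hexp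
  -- uPlus solves the ODE
  have hODE : ∀ t, HasDerivAt uPlus (f t - Complex.I * c t * uPlus t) t := by
    intro t
    have hfun : uPlus = fun t =>
        (Complex.exp a - 1)⁻¹ * (Einv t * (G (t + 2 * Real.pi) - G t)) := funext hrepP
    rw [hfun]
    have hΦ : HasDerivAt (fun t => G (t + 2 * Real.pi) - G t)
        (E (t + 2 * Real.pi) * f (t + 2 * Real.pi) - E t * f t) t :=
      ((hGd (t + 2 * Real.pi)).comp_add_const).sub (hGd t)
    have hprod := ((hEinvderiv t).mul hΦ).const_mul (Complex.exp a - 1)⁻¹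
    convert hprod using 1
    · rfl
    · rfl
    rw [hEf t]
    have hEinvE' := hEinvE t
    have hK1 : (Complex.exp a - 1)⁻¹ * (Complex.exp a - 1) = 1 := inv_mul_cancel₀ h1
    set K := (Complex.exp a - 1)⁻¹
    set e := Complex.exp a
    set v := Einv t
    set EE := E t
    set F := f t
    set P := G (t + 2 * Real.pi) - G t
    set ic := Complex.I * c t
    -- goal: F - ic * (K * (v * P)) = K * ((v * -ic) * P + v * (e * (EE * F) - EE * F))
    linear_combination (-F) * hK1 + (-(F * K * (e - 1))) * hEinvE'
  refine ⟨heq, hper, hODE, ?_⟩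
  -- uniqueness
  intro v hvper hvd
  have hw : ∀ t, HasDerivAt (fun t => E t * (v t - uPlus t)) 0 t := by
    intro t
    have h := (hEderiv t).mul ((hvd t).sub (hODE t))
    convert h using 1
    · rfl
    · rfl
    rw [Pi.sub_apply]
    ring
  have hwconst : ∀ t : ℝ, E t * (v t - uPlus t) = E 0 * (v 0 - uPlus 0) := by
    intro t
    exact is_const_of_deriv_eq_zero
      (fun x => (hw x).differentiableAt) (fun x => (hw x).deriv) t 0
  have hE0 : E 0 = 1 := by
    rw [hE]; simp
  have hv0 : v 0 = uPlus 0 := by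
    have h6 := hwconst (0 + 2 * Real.pi)
    rw [hEshift, hE0, hvper 0, hper 0] at h6
    have h7 : (Complex.exp a - 1) * (v 0 - uPlus 0) = 0 := by linear_combination h6
    rcases mul_eq_zero.mp h7 with h8 | h8
    · exact absurd h8 h1
    · linear_combination h8
  funext t
  have h9 := hwconst t
  rw [hE0, hv0] at h9
  simp only [sub_self, mul_zero, one_mul] at h9
  rcases mul_eq_zero.mp h9 with h10 | h10
  · exact absurd h10 (hEne t)
  · linear_combination h10
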